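/- When n divides q, |I| = q/n, and k = 1, the code S_{I,J}^{(1)}(n) = I \times J^{n-1} has size ((n-1)/n)^{n-1} q^n / n, achieving Levenshtein's upper bound. -/

import Mathlib

lemma pmap_mk_map_val {α : Type*} {p : α → Prop} (l : List {x // p x})
    (H : ∀ x ∈ l.map Subtype.val, p x) :
    List.pmap Subtype.mk (l.map Subtype.val) H = l := by
  induction l with
  | nil => simp
  | cons a t ih => simp only [List.map_cons, List.pmap, Subtype.coe_eta, ih]

/-- When `n` divides `q`, `|I| = q/n`, and `k = 1`, the code
`S_{I,J}^{(1)}(n) = I × J^{n-1}` has size `((n-1)/n)^{n-1} qⁿ / n`, achieving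
Levenshtein's upper bound. -/
theorem stmt10 (n q : ℕ) (hn : 2 ≤ n) (hq : 2 ≤ q) (hdvd : n ∣ q)
    (I J : Finset (Fin q)) (hd : Disjoint I J) (hun : I ∪ J = Finset.univ)
    (hIcard : I.card = q / n) :
    (Nat.card {w : List (Fin q) //
        w.length = n ∧ w.getD 0 ⟨0, by omega⟩ ∈ I ∧ ∀ x ∈ w.drop 1, x ∈ J} : ℝ) =
      ((n - 1 : ℝ) / n) ^ (n - 1) * q ^ n / n := by
  classical
  have hnq : n ≤ q := Nat.le_of_dvd (by omega) hdvd
  set d : Fin q := ⟨0, by omega⟩ with hdval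
  -- the equivalence with I × (J-vectors of length n-1)
  have E : {w : List (Fin q) //
      w.length = n ∧ w.getD 0 d ∈ I ∧ ∀ x ∈ w.drop 1, x ∈ J}
      ≃ I × List.Vector J (n - 1) :=
    { toFun := fun w => (⟨w.1.getD 0 d, w.2.2.1⟩,
        ⟨(w.1.drop 1).pmap Subtype.mk w.2.2.2, by simp [w.2.1]⟩)
      invFun := fun p => ⟨(p.1 : Fin q) :: p.2.1.map Subtype.val, by
        constructor
        · simp [p.2.2]; omega
        · refine ⟨by simpa using p.1.2, ?_⟩
          intro x hx
          simp only [List.drop_one, List.tail_cons, List.mem_map] at hx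
          obtain ⟨y, _, rfl⟩ := hx
          exact y.2⟩
      left_inv := by
        rintro ⟨w, hl, hI, hJ⟩
        cases w with
        | nil => simp at hl; omega
        | cons a t =>
          apply Subtype.ext
          simp [List.map_pmap]
      right_inv := by
        rintro ⟨a, v⟩
        refine Prod.ext (Subtype.ext ?_) (Subtype.ext ?_)
        · simp
        · simp only [List.Vector.toList_mk]
          exact pmap_mk_map_val _ _ }
  rw [Nat.card_congr E]
  have hcard : Nat.card (I × List.Vector J (n - 1)) = I.card * J.card ^ (n - 1) := by
    rw [Nat.card_prod, Nat.card_eq_fintype_card, Nat.card_eq_fintype_card,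
      card_vector, Fintype.card_coe, Fintype.card_coe]
  rw [hcard]
  -- numeric part
  obtain ⟨m, rfl⟩ := hdvd
  have hm : 1 ≤ m := by
    rcases Nat.eq_zero_or_pos m with h | h
    · subst h; simp at hq
    · exact h
  have hIm : I.card = m := by
    rw [hIcard, Nat.mul_div_cancel_left _ (by omega : 0 < n)]
  have hJc : J.card = (n - 1) * m := by
    have h1 : I.card + J.card = n * m := by
      rw [← Finset.card_union_of_disjoint hd, hun, Finset.card_univ, Fintype.card_fin]
    rw [Nat.sub_mul, one_mul]
    omega
  rw [hIm, hJc]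
  have hn0 : (n : ℝ) ≠ 0 := by positivity
  have hcast : ((n - 1 : ℕ) : ℝ) = (n : ℝ) - 1 := by
    rw [Nat.cast_sub (by omega : 1 ≤ n)]; simp
  push_cast
  rw [hcast, div_pow, mul_pow, mul_pow]
  have hkey : (n : ℝ) ^ n = (n : ℝ) ^ (n - 1) * n := by
    rw [← pow_succ]; congr 1; omega
  have hmn : (m : ℝ) ^ n = m * (m : ℝ) ^ (n - 1) := by
    rw [← pow_succ']; congr 1; omega
  rw [hkey, hmn]
  field_simp
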